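/- Let a ≥ 2, p an odd prime with p ∤ a, and suppose m = p^e · m' with e ≥ 1 and p ∤ m', where m' = o_p(a). Then p² does not divide Φ_m(a). -/

import Mathlib

open Polynomial Finset

/-- For `a ≥ 2`, `p` an odd prime with `p ∤ a`, and `m = p ^ e * m'` with
`e ≥ 1`, `p ∤ m'`, and `m' = o_p(a)`, one has `p² ∤ Φ_m(a)`. -/
theorem not_prime_sq_dvd_cyclotomic_eval
    (a : ℤ) (ha : 2 ≤ a) (p : ℕ) (hp : p.Prime) (hodd : Odd p)
    (hpa : ¬ (p : ℤ) ∣ a) (m m' e : ℕ) (he : 1 ≤ e)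
    (hm' : m' = orderOf ((a : ZMod p))) (hpm' : ¬ p ∣ m')
    (hm : m = p ^ e * m') :
    ¬ ((p : ℤ) ^ 2 ∣ (Polynomial.cyclotomic m ℤ).eval a) := by
  have hm'0 : 0 < m' := Nat.pos_of_ne_zero (fun h => hpm' (h ▸ dvd_zero p))
  have hp2 : 2 ≤ p := hp.two_le
  set d : ℕ := p ^ (e - 1) * m' with hd
  have hdm : d * p = m := by
    rw [hm, hd]; ring_nf
    rw [← pow_succ']
    congr 2
    omega
  have hdpos : 0 < d := Nat.mul_pos (pow_pos hp.pos _) hm'0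
  have hdlt : d < m := by
    rw [← hdm]
    nlinarith [hdpos, hp2]
  have hdvd : d ∈ m.properDivisors := Nat.mem_properDivisors.mpr ⟨⟨p, hdm.symm⟩, hdlt⟩
  set b : ℤ := a ^ d with hb
  set S : ℤ := ∑ i ∈ Finset.range p, b ^ i with hS
  -- Φ_m(a) divides S
  have hdiv : (b - 1) * (cyclotomic m ℤ).eval a ∣ (b - 1) * S := by
    have h1 := X_pow_sub_one_mul_cyclotomic_dvd_X_pow_sub_one_of_dvd ℤ hdvd
    have h2 := eval_dvd (x := a) h1
    simp only [map_mul, map_sub, map_pow, map_one, eval_X, coe_evalRingHom, eval_mul, eval_sub,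
      eval_pow, eval_one] at h2
    have : (b - 1) * S = a ^ m - 1 := by
      rw [mul_comm, hS, hb, geom_sum_mul, ← pow_mul, hdm]
    rwa [← this] at h2
  have hb1 : (1:ℤ) < b := by
    calc (1:ℤ) < 2 := one_lt_two
    _ ≤ a := ha
    _ ≤ a ^ d := le_self_pow₀ (by omega) hdpos.ne'
  have hbne : b - 1 ≠ 0 := by omega
  have hdiv2 : (cyclotomic m ℤ).eval a ∣ S :=
    (mul_dvd_mul_iff_left hbne).mp hdiv
  -- p ∣ b - 1
  have hord : ((a : ZMod p) : ZMod p) ^ d = 1 := by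
    have : orderOf ((a : ZMod p)) ∣ d := hd ▸ hm' ▸ Dvd.intro_left _ rfl
    exact orderOf_dvd_iff_pow_eq_one.mp this
  have hpb : (p:ℤ) ∣ b - 1 := by
    have : ((b - 1 : ℤ) : ZMod p) = 0 := by
      rw [hb]
      push_cast
      rw [hord]; ring
    exact (ZMod.intCast_zmod_eq_zero_iff_dvd _ _).mp this
  -- S - p = (b-1) * T
  set T : ℤ := ∑ i ∈ Finset.range p, ∑ j ∈ Finset.range i, b ^ j with hT
  have hST : S - p = (b - 1) * T := by
    rw [hS, hT, Finset.mul_sum]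
    have : (p : ℤ) = ∑ _i ∈ Finset.range p, (1:ℤ) := by simp
    rw [this, ← Finset.sum_sub_distrib]
    refine Finset.sum_congr rfl (fun i _ => ?_)
    rw [mul_comm, geom_sum_mul]
  -- p ∣ T
  have hgauss : p ∣ ∑ i ∈ Finset.range p, i := by
    have h2p : Nat.Coprime p 2 := hodd.coprime_two_right
    have : (∑ i ∈ Finset.range p, i) * 2 = p * (p - 1) := Finset.sum_range_id_mul_two p
    exact (Nat.Coprime.dvd_of_dvd_mul_right h2p) (this ▸ Dvd.intro _ rfl)
  have hpT : (p:ℤ) ∣ T := by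
    have : ((T : ℤ) : ZMod p) = 0 := by
      rw [hT]
      push_cast
      have hb1p : ((b:ℤ) : ZMod p) = 1 := by
        have : ((b - 1 : ℤ) : ZMod p) = 0 := (ZMod.intCast_zmod_eq_zero_iff_dvd _ _).mpr hpb
        push_cast at this
        linear_combination this
      rw [hb1p]
      simp only [one_pow, Finset.sum_const, Finset.card_range, nsmul_eq_mul, mul_one]
      have h0 : ((∑ i ∈ Finset.range p, i : ℕ) : ZMod p) = 0 :=
        (ZMod.natCast_eq_zero_iff _ _).mpr hgauss
      rw [Nat.cast_sum] at h0
      simpa using h0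
    exact (ZMod.intCast_zmod_eq_zero_iff_dvd _ _).mp this
  -- conclude
  intro hcon
  have h1 : (p:ℤ)^2 ∣ S := dvd_trans hcon hdiv2
  have h2 : (p:ℤ)^2 ∣ S - p := by
    rw [hST, sq]
    exact mul_dvd_mul hpb hpT
  have h3 : (p:ℤ)^2 ∣ (p:ℤ) := by
    have := dvd_sub h1 h2
    simpa using this
  have h4 : (p:ℤ)^2 ≤ p := Int.le_of_dvd (by exact_mod_cast hp.pos) h3
  have : (p:ℤ) ≥ 2 := by exact_mod_cast hp2
  nlinarith
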